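/- Let G be a finite abelian group of odd order and let q be a quadratic linking form on G. Then the Gauss sum S = Σ_{g ∈ G} exp(2πi·q(g)) satisfies S⁴ = |G|²; equivalently, Γ(q) := |G|^{-1/2}·S is a fourth root of unity. -/

import Mathlib

/-- The group `ℚ/ℤ`. -/
abbrev QZ : Type := ℚ ⧸ AddSubgroup.zmultiples (1 : ℚ)

noncomputable def eps (x : QZ) : ℂ :=
  Quotient.liftOn' x (fun r : ℚ => Complex.exp (2 * Real.pi * Complex.I * (r : ℂ))) (by
    intro a b h
    rw [QuotientAddGroup.leftRel_apply] at h
    obtain ⟨n, hn⟩ := AddSubgroup.mem_zmultiples_iff.mp h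
    have hq : (b : ℚ) = a + n := by
      have : ((n:ℚ)) = -a + b := by simpa [zsmul_eq_mul] using hn
      linarith
    have hb : (b : ℂ) = (a : ℂ) + (n : ℂ) := by exact_mod_cast congrArg (fun r : ℚ => (r : ℂ)) hq
    simp only [hb, mul_add, Complex.exp_add]
    rw [show 2 * (Real.pi:ℂ) * Complex.I * (n:ℂ) = (n:ℂ) * (2 * Real.pi * Complex.I) by ring,
      Complex.exp_int_mul_two_pi_mul_I, mul_one])

lemma eps_mk (r : ℚ) : eps (QuotientAddGroup.mk r) = Complex.exp (2 * Real.pi * Complex.I * (r : ℂ)) := rfl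

lemma eps_add (x y : QZ) : eps (x + y) = eps x * eps y := by
  induction x using QuotientAddGroup.induction_on with
  | H a =>
  induction y using QuotientAddGroup.induction_on with
  | H b =>
  show eps (QuotientAddGroup.mk (a + b)) = _
  rw [eps_mk, eps_mk, eps_mk, ← Complex.exp_add]
  congr 1
  push_cast
  ring

lemma eps_zero : eps 0 = 1 := by
  show eps (QuotientAddGroup.mk 0) = 1
  rw [eps_mk]; simp

lemma eps_conj (x : QZ) : (starRingEnd ℂ) (eps x) = eps (-x) := by
  induction x using QuotientAddGroup.induction_on with
  | H a =>
  show _ = eps (QuotientAddGroup.mk (-a))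
  rw [eps_mk, eps_mk, ← Complex.exp_conj]
  congr 1
  rw [map_mul, map_mul, map_mul, Complex.conj_I, map_ofNat, Complex.conj_ofReal,
    map_ratCast]
  push_cast
  ring

lemma eps_eq_one {x : QZ} (h : eps x = 1) : x = 0 := by
  induction x using QuotientAddGroup.induction_on with
  | H a =>
  rw [eps_mk, Complex.exp_eq_one_iff] at h
  obtain ⟨n, hn⟩ := h
  have h2 : (2 * (Real.pi:ℂ) * Complex.I : ℂ) ≠ 0 := by
    simp [Real.pi_ne_zero, Complex.I_ne_zero]
  have hmul : ((a:ℂ) - (n:ℂ)) * (2 * Real.pi * Complex.I) = 0 := by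
    linear_combination hn
  have : (a : ℂ) = (n : ℂ) := by
    rcases mul_eq_zero.mp hmul with h' | h'
    · exact sub_eq_zero.mp h'
    · exact absurd h' h2
  have ha : (a : ℚ) = n := by exact_mod_cast this
  rw [QuotientAddGroup.eq_zero_iff]
  exact ⟨n, by simp [ha]⟩

/-- Hensel-type lifting step. -/
lemma step_lift (p : ℕ) (hp : p.Prime) (hp2 : p ≠ 2) (n : ℕ) (hn : 1 ≤ n)
    (a b : ℤ) (h : ((p:ℤ))^n ∣ a^2 + b^2 + 1) (ha : ¬ ((p:ℤ) ∣ a)) :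
    ∃ a' b' : ℤ, ((p:ℤ))^(n+1) ∣ a'^2 + b'^2 + 1 := by
  obtain ⟨c, hc⟩ := h
  haveI : Fact p.Prime := ⟨hp⟩
  have hpZ : Prime ((p:ℤ)) := Nat.prime_iff_prime_int.mp hp
  have h2a : ((2 * a : ℤ) : ZMod p) ≠ 0 := by
    rw [Ne, ZMod.intCast_zmod_eq_zero_iff_dvd]
    intro hdvd
    rcases (hpZ.dvd_mul.mp hdvd) with h' | h'
    · have hle : (p:ℤ) ≤ 2 := Int.le_of_dvd (by norm_num) h'
      have := hp.two_le
      omega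
    · exact ha h'
  set tz : ZMod p := -(c : ZMod p) * ((2*a : ℤ) : ZMod p)⁻¹ with htz
  set t : ℤ := (tz.val : ℤ) with ht
  have htt : ((t : ZMod p)) = tz := by
    simp [ht, ZMod.natCast_val, ZMod.intCast_cast, ZMod.cast_id]
  have hdvd : (p:ℤ) ∣ c + 2*a*t := by
    rw [← ZMod.intCast_zmod_eq_zero_iff_dvd, Int.cast_add, Int.cast_mul, htt, htz]
    rw [show ((c:ZMod p)) + ((2*a:ℤ) : ZMod p) * (-(c : ZMod p) * ((2*a : ℤ) : ZMod p)⁻¹)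
        = (c:ZMod p) - (c:ZMod p) * (((2*a:ℤ) : ZMod p) * ((2*a:ℤ) : ZMod p)⁻¹) by push_cast; ring,
      mul_inv_cancel₀ h2a]
    simp
  refine ⟨a + t * (p:ℤ)^n, b, ?_⟩
  have key : (a + t * (p:ℤ)^n)^2 + b^2 + 1
      = (p:ℤ)^n * (c + 2*a*t) + t^2 * ((p:ℤ)^n)^2 := by
    linear_combination hc
  rw [key]
  apply dvd_add
  · rw [pow_succ]
    exact mul_dvd_mul_left _ hdvd
  · rw [← pow_mul]
    exact Dvd.dvd.mul_left (pow_dvd_pow _ (by omega)) _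

lemma prime_pow_case (p : ℕ) (hp : p.Prime) (hp2 : p ≠ 2) (n : ℕ) :
    ∃ a b : ℤ, ((p:ℤ))^n ∣ a^2 + b^2 + 1 := by
  haveI : Fact p.Prime := ⟨hp⟩
  rcases Nat.eq_zero_or_pos n with rfl | hn
  · exact ⟨0, 0, by norm_num⟩
  induction n, hn using Nat.le_induction with
  | base =>
    obtain ⟨a, b, hab⟩ := ZMod.sq_add_sq p (-1)
    refine ⟨(a.val : ℤ), (b.val : ℤ), ?_⟩
    rw [pow_one, ← ZMod.intCast_zmod_eq_zero_iff_dvd]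
    push_cast
    have ha : ((a.val : ℕ) : ZMod p) = a := by
      simp [ZMod.natCast_val, ZMod.cast_id]
    have hb : ((b.val : ℕ) : ZMod p) = b := by
      simp [ZMod.natCast_val, ZMod.cast_id]
    push_cast at ha hb
    rw [ha, hb, hab]
    ring
  | succ n hn ih =>
    obtain ⟨a, b, hab⟩ := ih
    have hp1 : (p:ℤ) ∣ a^2 + b^2 + 1 := dvd_trans (dvd_pow_self _ (by omega)) hab
    by_cases ha : (p:ℤ) ∣ a
    · by_cases hb : (p:ℤ) ∣ b
      · exfalso
        have h2 : (p:ℤ) ∣ a^2 + b^2 := by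
          have h4 := dvd_add (ha.mul_right a) (hb.mul_right b)
          rwa [show a*a + b*b = a^2+b^2 by ring] at h4
        have h3 : (p:ℤ) ∣ 1 := (dvd_add_right h2).mp hp1
        have := Int.le_of_dvd (by norm_num) h3
        have := hp.two_le
        omega
      · have hab' : ((p:ℤ))^n ∣ b^2 + a^2 + 1 := by rwa [show b^2+a^2+1 = a^2+b^2+1 by ring]
        exact step_lift p hp hp2 n hn b a hab' hb
    · exact step_lift p hp hp2 n hn a b hab ha


lemma crt_case (m n : ℕ) (hm : 0 < m) (hn : 0 < n) (hmn : m.Coprime n)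
    (h1 : ∃ a b : ℤ, (m:ℤ) ∣ a^2 + b^2 + 1) (h2 : ∃ a b : ℤ, (n:ℤ) ∣ a^2 + b^2 + 1) :
    ∃ a b : ℤ, ((m*n : ℕ):ℤ) ∣ a^2 + b^2 + 1 := by
  obtain ⟨a1, b1, hab1⟩ := h1
  obtain ⟨a2, b2, hab2⟩ := h2
  haveI : NeZero (m*n) := ⟨by positivity⟩
  set e := ZMod.chineseRemainder hmn with he
  set x : ZMod (m*n) := e.symm ((a1 : ZMod m), (a2 : ZMod n)) with hx
  set y : ZMod (m*n) := e.symm ((b1 : ZMod m), (b2 : ZMod n)) with hy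
  refine ⟨(x.val : ℤ), (y.val : ℤ), ?_⟩
  rw [← ZMod.intCast_zmod_eq_zero_iff_dvd]
  have hxx : (((x.val : ℤ)) : ZMod (m*n)) = x := by
    push_cast
    simp [ZMod.natCast_val, ZMod.cast_id]
  have hyy : (((y.val : ℤ)) : ZMod (m*n)) = y := by
    push_cast
    simp [ZMod.natCast_val, ZMod.cast_id]
  push_cast
  push_cast at hxx hyy
  rw [hxx, hyy]
  apply e.injective
  rw [map_add, map_add, map_pow, map_pow, map_one, hx, hy,
    RingEquiv.apply_symm_apply, RingEquiv.apply_symm_apply]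
  have hz1 : ((a1 : ZMod m))^2 + (b1 : ZMod m)^2 + 1 = 0 := by
    have := (ZMod.intCast_zmod_eq_zero_iff_dvd (a1^2+b1^2+1) m).mpr hab1
    push_cast at this
    linear_combination this
  have hz2 : ((a2 : ZMod n))^2 + (b2 : ZMod n)^2 + 1 = 0 := by
    have := (ZMod.intCast_zmod_eq_zero_iff_dvd (a2^2+b2^2+1) n).mpr hab2
    push_cast at this
    linear_combination this
  rw [map_zero]
  rw [Prod.ext_iff]
  constructor
  · simpa using hz1
  · simpa using hz2

lemma exists_sq_add_sq_neg_one : ∀ (N : ℕ), Odd N → ∃ a b : ℤ, (N:ℤ) ∣ a^2 + b^2 + 1 := by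
  intro N
  induction N using Nat.recOnPosPrimePosCoprime with
  | prime_pow p k hp hk =>
    intro hodd
    have hp2 : p ≠ 2 := by
      rintro rfl
      have : Even (2^k) := (Nat.even_pow).mpr ⟨even_two, by omega⟩
      exact (Nat.not_odd_iff_even.mpr this) hodd
    have := prime_pow_case p hp hp2 k
    simpa using this
  | zero => intro h; simp at h
  | one => intro _; exact ⟨0, 0, by norm_num⟩
  | coprime a b ha hb hab iha ihb =>
    intro hodd
    rw [Nat.odd_mul] at hodd
    exact crt_case a b (by omega) (by omega) hab (iha hodd.1) (ihb hodd.2)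

lemma gauss_smul_neg {M : Type*} [AddCommGroup M] (N : ℕ) (c A B : ℤ)
    (hc : A^2 + B^2 + 1 = (N:ℤ) * c) (z : M) (hz : (N:ℤ) • z = 0) :
    (A^2 + B^2) • z = -z := by
  have h1 : (A^2 + B^2 : ℤ) = (N:ℤ)*c - 1 := by linarith
  rw [h1, sub_smul, mul_comm, mul_smul, hz, smul_zero, one_smul, zero_sub]

lemma sum_eps_eq_zero {G : Type*} [AddCommGroup G] [Fintype G] (f : G →+ QZ) (hf : f ≠ 0) :
    ∑ h : G, eps (f h) = 0 := by
  obtain ⟨h₀, hh₀⟩ := DFunLike.ne_iff.mp hf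
  have hc : eps (f h₀) ≠ 1 := fun hc => hh₀ (eps_eq_one hc)
  have hshift : eps (f h₀) * ∑ h : G, eps (f h) = ∑ h : G, eps (f h) := by
    rw [Finset.mul_sum]
    calc ∑ h : G, eps (f h₀) * eps (f h)
        = ∑ h : G, eps (f (h₀ + h)) := by
          refine Finset.sum_congr rfl fun h _ => ?_
          rw [map_add, eps_add]
      _ = ∑ h : G, eps (f h) := Equiv.sum_comp (Equiv.addLeft h₀) (fun h => eps (f h))
  have : (eps (f h₀) - 1) * ∑ h : G, eps (f h) = 0 := by linear_combination hshift
  rcases mul_eq_zero.mp this with h | h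
  · exact absurd (by linear_combination h) hc
  · exact h


/-- A linking form on an abelian group `G`: a symmetric biadditive pairing `G × G → ℚ/ℤ`
which is nonsingular, i.e. `g ↦ β(g,·)` is a bijection from `G` onto `Hom(G, ℚ/ℤ)`. -/
def IsLinkingForm {G : Type*} [AddCommGroup G] (β : G → G → QZ) : Prop :=
  (∀ g h : G, β g h = β h g) ∧
  (∀ g h k : G, β (g + h) k = β g k + β h k) ∧
  (∀ φ : G →+ QZ, ∃! g : G, ∀ h : G, β g h = φ h)

/-- A quadratic linking form on `G`: an even function `q : G → ℚ/ℤ` such that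
`β_q(g,h) = q(g+h) - q(g) - q(h)` is a linking form. -/
def IsQuadraticLinkingForm {G : Type*} [AddCommGroup G] (q : G → QZ) : Prop :=
  (∀ g : G, q (-g) = q g) ∧
  IsLinkingForm (fun g h => q (g + h) - q g - q h)

/-- Let `G` be a finite abelian group of odd order and `q` a quadratic
linking form on `G`. Choosing any rational representatives `Q g` of the values `q g`,
the Gauss sum `S = ∑_{g ∈ G} exp(2πi · Q g)` satisfies `S⁴ = |G|²`, i.e. `|G|^{-1/2}·S`
is a fourth root of unity. -/
theorem stmt_3 (G : Type*) [AddCommGroup G] [Fintype G] (hodd : Odd (Fintype.card G))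
    (q : G → QZ) (hq : IsQuadraticLinkingForm q)
    (Q : G → ℚ) (hQ : ∀ g : G, (QuotientAddGroup.mk (Q g) : QZ) = q g) :
    (∑ g : G, Complex.exp (2 * Real.pi * Complex.I * (Q g : ℂ))) ^ 4 =
      (Fintype.card G : ℂ) ^ 2 := by
  classical
  obtain ⟨heven, hsym0, hadd0, hnd0⟩ := hq
  -- beta-reduced statements
  have hsym : ∀ g h : G, q (g + h) - q g - q h = q (h + g) - q h - q g := hsym0
  have hadd : ∀ g h k : G,
      q (g + h + k) - q (g + h) - q k
        = (q (g + k) - q g - q k) + (q (h + k) - q h - q k) := hadd0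
  have hnd : ∀ φ : G →+ QZ, ∃! g : G, ∀ h : G, q (g + h) - q g - q h = φ h := hnd0
  set N := Fintype.card G with hNdef
  -- the bilinear form, as a hom in the second variable
  have B2add : ∀ g h h' : G, q (g + (h + h')) - q g - q (h + h')
      = (q (g + h) - q g - q h) + (q (g + h') - q g - q h') := by
    intro g h h'
    rw [hsym g (h + h'), hadd h h' g, ← hsym g h, ← hsym g h']
  let B2 : G → G →+ QZ := fun g =>
    AddMonoidHom.mk' (fun h => q (g + h) - q g - q h) (fun h h' => B2add g h h')
  have hB2 : ∀ g h : G, B2 g h = q (g + h) - q g - q h := fun g h => rfl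
  -- basic facts
  have hb0 : ∀ h : G, B2 0 h = 0 := by
    intro h
    have h2 : B2 (0 + 0 : G) h = B2 0 h + B2 0 h := by
      simp only [hB2]; exact hadd 0 0 h
    rw [zero_add] at h2
    rwa [left_eq_add] at h2
  have hq0 : q 0 = 0 := by
    have h2 := hb0 0
    rw [hB2, add_zero, sub_self, zero_sub, neg_eq_zero] at h2
    exact h2
  have hexp : ∀ g h : G, q (g + h) = q g + q h + B2 g h := by
    intro g h; rw [hB2]; abel
  have hsymB : ∀ g h : G, B2 g h = B2 h g := by
    intro g h; rw [hB2, hB2]; exact hsym g h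
  -- B2 is also additive (hence ℤ-linear) in the first variable
  have hzsmul1 : ∀ (n : ℤ) (g h : G), B2 (n • g) h = n • B2 g h := by
    intro n g h
    rw [hsymB, map_zsmul, hsymB]
  have hbgg : ∀ g : G, B2 g g = q g + q g := by
    intro g
    have h1 : B2 g (-g) = - B2 g g := map_neg (B2 g) g
    have h2 : B2 g (-g) = -(q g + q g) := by
      rw [hB2, add_neg_cancel, hq0, heven g]; abel
    rw [h1] at h2
    exact neg_injective h2
  -- quadratic scaling
  have hqn : ∀ (n : ℕ) (g : G), q (n • g) = (n^2) • q g := by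
    intro n g
    induction n with
    | zero => simp [hq0]
    | succ n ih =>
      have e1 : ((n+1) : ℕ) • g = n • g + g := succ_nsmul g n
      rw [e1, hexp, ih]
      have e2 : B2 (n • g) g = n • B2 g g := by
        rw [hsymB, map_nsmul, hsymB]
      rw [e2, hbgg]
      rw [show (n+1)^2 = n^2 + n + n + 1 by ring]
      rw [add_smul, add_smul, add_smul, one_smul, smul_add]
      abel
  have hqz : ∀ (n : ℤ) (g : G), q (n • g) = (n^2) • q g := by
    intro n g
    cases n with
    | ofNat m =>
      rw [Int.ofNat_eq_coe, natCast_zsmul, hqn m g]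
      rw [show ((m:ℤ))^2 = ((m^2 : ℕ) : ℤ) by push_cast; ring, natCast_zsmul]
    | negSucc m =>
      rw [negSucc_zsmul, heven, hqn (m+1) g]
      rw [show (Int.negSucc m)^2 = (((m+1)^2 : ℕ) : ℤ) by
        rw [Int.negSucc_eq]; push_cast; ring, natCast_zsmul]
  -- card kills everything
  have hcard : ∀ g : G, (N:ℤ) • g = 0 := by
    intro g
    rw [natCast_zsmul]
    exact card_nsmul_eq_zero
  have hNb : ∀ g h : G, (N:ℤ) • B2 g h = 0 := by
    intro g h
    rw [← hzsmul1, hcard, hb0]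
  have hNq : ∀ g : G, (N:ℤ) • q g = 0 := by
    intro g
    obtain ⟨k, hk⟩ := hodd
    have hNZ : (N:ℤ) = 2*(k:ℤ) + 1 := by exact_mod_cast hk
    have h1 : ((2*(N:ℤ))) • q g = 0 := by
      rw [show (2*(N:ℤ)) = (N:ℤ)*2 by ring, mul_smul, two_smul, ← hbgg, hNb]
    have h2 : ((N:ℤ)^2) • q g = 0 := by
      have := hqz (N:ℤ) g
      rw [hcard, hq0] at this
      exact this.symm
    have hNk : (N:ℤ) = (N:ℤ)^2 - (k:ℤ)*(2*(N:ℤ)) := by rw [hNZ]; ring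
    calc (N:ℤ) • q g = ((N:ℤ)^2 - (k:ℤ)*(2*(N:ℤ))) • q g := by rw [← hNk]
      _ = ((N:ℤ)^2) • q g - (k:ℤ) • ((2*(N:ℤ)) • q g) := by
          rw [sub_smul, smul_smul]
      _ = 0 := by rw [h1, h2, smul_zero, sub_zero]
  -- orthogonality
  have horth : ∀ g : G, (∑ h : G, eps (B2 g h)) = if g = 0 then (N:ℂ) else 0 := by
    intro g
    by_cases hg : g = 0
    · subst hg
      simp only [if_pos rfl]
      rw [Finset.sum_congr rfl fun h _ => by rw [hb0 h, eps_zero]]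
      simp [hNdef]
    · rw [if_neg hg]
      apply sum_eps_eq_zero (B2 g)
      intro hzero
      obtain ⟨g₀, hg₀, huni⟩ := hnd 0
      have e1 : g = g₀ := huni g (fun h => by
        rw [← hB2, hzero])
      have e2 : (0:G) = g₀ := huni 0 (fun h => by
        rw [← hB2, hb0]; rfl)
      exact hg (e1.trans e2.symm)
  -- the Gauss sum
  set S : ℂ := ∑ g : G, eps (q g) with hSdef
  have hCast : (∑ g : G, Complex.exp (2 * Real.pi * Complex.I * (Q g : ℂ))) = S := by
    rw [hSdef]
    refine Finset.sum_congr rfl fun g _ => ?_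
    rw [← hQ g, eps_mk]
  have key1 : ∀ h x : G, eps (q (x + h)) * eps (-(q h)) = eps (q x) * eps (B2 x h) := by
    intro h x
    rw [← eps_add, ← eps_add]
    congr 1
    rw [hexp x h]; abel
  have hSS : S * (starRingEnd ℂ) S = (N:ℂ) := by
    calc S * (starRingEnd ℂ) S
        = ∑ g : G, ∑ h : G, eps (q g) * eps (-(q h)) := by
          rw [hSdef, map_sum, Finset.sum_mul_sum]
          refine Finset.sum_congr rfl fun g _ => Finset.sum_congr rfl fun h _ => ?_
          rw [eps_conj]
      _ = ∑ h : G, ∑ g : G, eps (q g) * eps (-(q h)) := Finset.sum_comm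
      _ = ∑ h : G, ∑ x : G, eps (q (x + h)) * eps (-(q h)) := by
          refine Finset.sum_congr rfl fun h _ => ?_
          exact (Equiv.sum_comp (Equiv.addRight h) (fun g => eps (q g) * eps (-(q h)))).symm
      _ = ∑ h : G, ∑ x : G, eps (q x) * eps (B2 x h) := by
          exact Finset.sum_congr rfl fun h _ => Finset.sum_congr rfl fun x _ => key1 h x
      _ = ∑ x : G, ∑ h : G, eps (q x) * eps (B2 x h) := Finset.sum_comm
      _ = ∑ x : G, eps (q x) * ∑ h : G, eps (B2 x h) := by
          exact Finset.sum_congr rfl fun x _ => (Finset.mul_sum _ _ _).symm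
      _ = ∑ x : G, eps (q x) * (if x = 0 then (N:ℂ) else 0) := by
          exact Finset.sum_congr rfl fun x _ => by rw [horth x]
      _ = (N:ℂ) := by
          simp only [mul_ite, mul_zero]
          rw [Finset.sum_ite_eq' Finset.univ (0:G) (fun x => eps (q x) * (N:ℂ))]
          simp [hq0, eps_zero]
  -- two squares
  obtain ⟨A, B, hAB⟩ := exists_sq_add_sq_neg_one N hodd
  obtain ⟨c, hc⟩ := hAB
  have hkill : ∀ z : QZ, (N:ℤ) • z = 0 → (A^2+B^2) • z = -z :=
    fun z hz => gauss_smul_neg N c A B hc z hz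
  have hkillG : ∀ g : G, (A^2+B^2) • g = -g :=
    fun g => gauss_smul_neg N c A B hc g (hcard g)
  have hbs : ∀ (m n : ℤ) (g h : G), B2 (m • g) (n • h) = (m*n) • B2 g h := by
    intro m n g h
    rw [map_zsmul, hzsmul1, smul_smul, mul_comm]
  have hval : ∀ g h : G, q (A • g + B • h) + q (B • g - A • h) = -(q g + q h) := by
    intro g h
    have e1 : q (A • g + B • h) = (A^2) • q g + (B^2) • q h + (A*B) • B2 g h := by
      rw [hexp, hqz, hqz, hbs]
    have e2 : q (B • g - A • h) = (B^2) • q g + (A^2) • q h - (A*B) • B2 g h := by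
      rw [sub_eq_add_neg, ← neg_smul, hexp, hqz, hqz, hbs, neg_sq,
        show (B * -A) = -(A*B) by ring, neg_smul]
      abel
    rw [e1, e2]
    have e3 : (A^2) • q g + (B^2) • q h + (A*B) • B2 g h
        + ((B^2) • q g + (A^2) • q h - (A*B) • B2 g h) = (A^2+B^2) • (q g + q h) := by
      rw [smul_add, add_smul, add_smul]
      abel
    rw [e3]
    exact hkill _ (by rw [smul_add, hNq, hNq, add_zero])
  -- the reindexing equivalence on G × G
  set M : G × G → G × G := fun p => (A • p.1 + B • p.2, B • p.1 - A • p.2) with hMdef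
  have hMM : ∀ p : G × G, M (M p) = -p := by
    rintro ⟨g, h⟩
    show (A • (A • g + B • h) + B • (B • g - A • h),
        B • (A • g + B • h) - A • (B • g - A • h)) = -(g, h)
    have c1 : A • (A • g + B • h) + B • (B • g - A • h) = (A^2+B^2) • g := by module
    have c2 : B • (A • g + B • h) - A • (B • g - A • h) = (A^2+B^2) • h := by module
    rw [c1, c2, hkillG, hkillG]
    rfl
  have hModd : ∀ p : G × G, M (-p) = - M p := by
    rintro ⟨g, h⟩
    show (A • (-g) + B • (-h), B • (-g) - A • (-h))
        = -(A • g + B • h, B • g - A • h)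
    rw [show (-(A • g + B • h, B • g - A • h) : G × G)
        = (-(A • g + B • h), -(B • g - A • h)) from rfl, Prod.mk.injEq]
    constructor <;> module
  set e : (G × G) ≃ (G × G) := {
    toFun := M
    invFun := fun p => - M p
    left_inv := fun p => by simp only; rw [hMM, neg_neg]
    right_inv := fun p => by simp only; rw [hModd, hMM, neg_neg] } with hedef
  have hprod : ∑ p : G × G, eps (q p.1 + q p.2) = ∑ g : G, ∑ h : G, eps (q g + q h) :=
    Fintype.sum_prod_type (f := fun p => eps (q p.1 + q p.2))
  have hs2 : S^2 = ∑ p : G × G, eps (q p.1 + q p.2) := by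
    rw [sq, hSdef, Finset.sum_mul_sum, hprod]
    exact Finset.sum_congr rfl fun g _ => Finset.sum_congr rfl fun h _ => (eps_add _ _).symm
  have hconj2 : S^2 = (starRingEnd ℂ) (S^2) := by
    calc S^2 = ∑ p : G × G, eps (q p.1 + q p.2) := hs2
      _ = ∑ p : G × G, eps (q (e p).1 + q (e p).2) :=
          (Equiv.sum_comp e (fun p => eps (q p.1 + q p.2))).symm
      _ = ∑ p : G × G, (starRingEnd ℂ) (eps (q p.1 + q p.2)) := by
          refine Finset.sum_congr rfl fun p _ => ?_
          show eps (q (A • p.1 + B • p.2) + q (B • p.1 - A • p.2)) = _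
          rw [hval, ← eps_conj]
      _ = (starRingEnd ℂ) (∑ p : G × G, eps (q p.1 + q p.2)) := (map_sum _ _ _).symm
      _ = (starRingEnd ℂ) (S^2) := by rw [hs2]
  rw [hCast]
  calc S^4 = S^2 * S^2 := by ring
    _ = S^2 * (starRingEnd ℂ) (S^2) := by rw [← hconj2]
    _ = S^2 * ((starRingEnd ℂ) S)^2 := by rw [map_pow]
    _ = (S * (starRingEnd ℂ) S)^2 := by ring
    _ = ((N:ℂ))^2 := by rw [hSS]
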